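/- Let p be prime, p > n, 0 < t+1 <= n, and fix a secret s in Z_p and a set C of at most t indices in {1,...,n}. If f is drawn uniformly from degree-<=t polynomials in Z_p[X] with f(0) = s, then the vector of shares (f(i))_{i in C} is uniformly distributed on Z_p^{|C|}. In particular, any t or fewer shares are statistically independent of the secret s. -/

import Mathlib

/-- Perfect secrecy of Shamir sharing: for a uniform degree-≤t polynomial with f(0) = s,
any ≤ t shares are uniformly distributed (each value vector has exactly p^(t-|C|) preimages). -/
theorem stmt9 (p n t : ℕ) [Fact p.Prime] (hpn : n < p) (htn : t + 1 ≤ n)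
    (s : ZMod p) (C : Finset ℕ) (hC : C ⊆ Finset.Icc 1 n) (hCcard : C.card ≤ t)
    (y : ℕ → ZMod p) :
    (Finset.univ.filter (fun a : Fin t → ZMod p =>
        ∀ i ∈ C, s + ∑ μ, a μ * (i : ZMod p) ^ ((μ : ℕ) + 1) = y i)).card
      = p ^ (t - C.card) := by
  classical
  have hlt : ∀ m ∈ insert 0 C, m < p := by
    intro m hm
    rcases Finset.mem_insert.mp hm with rfl | hm
    · exact (Fact.out : p.Prime).pos
    · exact lt_of_le_of_lt (Finset.mem_Icc.mp (hC hm)).2 hpn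
  have h0C : (0 : ℕ) ∉ C := fun h => by simpa using (Finset.mem_Icc.mp (hC h)).1
  have hinj : Set.InjOn (Nat.cast : ℕ → ZMod p) (insert 0 C : Finset ℕ) := by
    intro i hi j hj hij
    have hi' := ZMod.val_cast_of_lt (hlt i hi)
    have hj' := ZMod.val_cast_of_lt (hlt j hj)
    rw [← hi', ← hj', hij]
  -- the linear map sending coefficients to shares
  set M : Matrix {x // x ∈ C} (Fin t) (ZMod p) :=
    fun i μ => ((i : ℕ) : ZMod p) ^ ((μ : ℕ) + 1) with hM
  set L := M.mulVecLin with hL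
  have hLapp : ∀ (a : Fin t → ZMod p) (i : {x // x ∈ C}),
      L a i = ∑ μ, a μ * ((i : ℕ) : ZMod p) ^ ((μ : ℕ) + 1) := by
    intro a i
    simp only [hL, Matrix.mulVecLin_apply, Matrix.mulVec, dotProduct, hM]
    exact Finset.sum_congr (s₁ := Finset.univ) rfl fun (μ : Fin t) _ => mul_comm (((i : ℕ) : ZMod p) ^ ((μ : ℕ) + 1)) (a μ)
  -- surjectivity via Lagrange interpolation
  have hsurj : Function.Surjective L := by
    intro b
    set w : ℕ → ZMod p := fun i => if h : i ∈ C then b ⟨i, h⟩ else 0 with hw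
    set g := Lagrange.interpolate (insert 0 C) (Nat.cast : ℕ → ZMod p) w with hg
    have hdeg : g.natDegree < t + 1 := by
      rcases eq_or_ne g 0 with h | h
      · simp [h]
      · rw [Polynomial.natDegree_lt_iff_degree_lt h]
        refine lt_of_lt_of_le (Lagrange.degree_interpolate_lt _ hinj) ?_
        rw [Finset.card_insert_of_notMem h0C]
        exact_mod_cast Nat.add_le_add_right hCcard 1
    have hcoeff0 : g.coeff 0 = 0 := by
      have := Lagrange.eval_interpolate_at_node (s := insert 0 C)
        (v := (Nat.cast : ℕ → ZMod p)) w hinj (Finset.mem_insert_self 0 C)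
      simp only [Nat.cast_zero] at this
      rw [Polynomial.coeff_zero_eq_eval_zero, hg, this, hw]
      simp [h0C]
    refine ⟨fun μ => g.coeff ((μ : ℕ) + 1), ?_⟩
    funext i
    have heval : g.eval ((i : ℕ) : ZMod p) = b i := by
      have := Lagrange.eval_interpolate_at_node (s := insert 0 C)
        (v := (Nat.cast : ℕ → ZMod p)) w hinj (Finset.mem_insert_of_mem i.2)
      rw [hg, this, hw]
      simp [i.2]
    rw [hLapp]
    have := Polynomial.eval_eq_sum_range' hdeg ((i : ℕ) : ZMod p)
    rw [Finset.sum_range_succ'] at this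
    rw [heval] at this
    rw [this, hcoeff0, zero_mul, add_zero]
    exact Fin.sum_univ_eq_sum_range (fun k => g.coeff (k + 1) * ((i : ℕ) : ZMod p) ^ (k + 1)) t
  -- counting: the fiber is a coset of the kernel
  obtain ⟨a0, ha0⟩ := hsurj (fun i : {x // x ∈ C} => y i - s)
  have hiff : ∀ a : Fin t → ZMod p,
      (∀ i ∈ C, s + ∑ μ, a μ * (i : ZMod p) ^ ((μ : ℕ) + 1) = y i) ↔
        L a = fun i : {x // x ∈ C} => y i - s := by
    intro a
    constructor
    · intro h
      funext i
      rw [hLapp]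
      have := h i i.2
      push_cast at this ⊢
      linear_combination this
    · intro h i hi
      have := congrFun h ⟨i, hi⟩
      rw [hLapp] at this
      push_cast at this ⊢
      linear_combination this
  have e : {a : Fin t → ZMod p // L a = fun i : {x // x ∈ C} => y i - s} ≃
      LinearMap.ker L :=
    { toFun := fun a => ⟨a.1 - a0, by
        rw [LinearMap.mem_ker, map_sub, a.2, ha0, sub_self]⟩
      invFun := fun a => ⟨a.1 + a0, by
        rw [map_add, ha0, LinearMap.mem_ker.mp a.2, zero_add]⟩
      left_inv := fun a => by simp
      right_inv := fun a => by simp }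
  have hcard : (Finset.univ.filter (fun a : Fin t → ZMod p =>
      ∀ i ∈ C, s + ∑ μ, a μ * (i : ZMod p) ^ ((μ : ℕ) + 1) = y i)).card
      = Fintype.card (LinearMap.ker L) := by
    rw [← Fintype.card_coe, ← Fintype.card_congr e]
    apply Fintype.card_congr
    exact Equiv.subtypeEquivRight fun a => by
      simp only [Finset.mem_filter, Finset.mem_univ, true_and]
      exact hiff a
  rw [hcard]
  have hrank : Module.finrank (ZMod p) (LinearMap.ker L) = t - C.card := by
    have h1 := LinearMap.finrank_range_add_finrank_ker L
    rw [LinearMap.range_eq_top.mpr hsurj, finrank_top] at h1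
    rw [Module.finrank_fintype_fun_eq_card, Module.finrank_fintype_fun_eq_card,
      Fintype.card_fin, Fintype.card_coe] at h1
    exact eq_tsub_of_add_eq (by rw [Nat.add_comm]; exact h1)
  rw [Module.card_eq_pow_finrank (K := ZMod p) (V := LinearMap.ker L), ZMod.card, hrank]
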